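/- Every group extension 1 → N → G → Q → 1 determines a five-term exact sequence M(G) → M(Q) → N/[N,G] → G/G' → Q/Q' → 1 of abelian-group homomorphisms. -/

import Mathlib

open Subgroup

section Helpers

lemma exists_mlift {ι : Type} {H K : Type*} [Group H] [Group K] (p : H →* K)
    (hp : Function.Surjective p) (f : FreeGroup ι →* K) :
    ∃ φ : FreeGroup ι →* H, p.comp φ = f := by
  refine ⟨FreeGroup.lift fun i => (hp (f (FreeGroup.of i))).choose, ?_⟩
  apply FreeGroup.ext_hom
  intro a
  simp [(hp (f (FreeGroup.of a))).choose_spec]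

open scoped commutatorElement in
lemma mk_mem_center {G : Type*} [Group G] (N : Subgroup G) [N.Normal]
    {n : G} (hn : n ∈ N) :
    (QuotientGroup.mk n : G ⧸ ⁅N, (⊤ : Subgroup G)⁆) ∈ Subgroup.center _ := by
  rw [Subgroup.mem_center_iff]
  intro y
  induction y using QuotientGroup.induction_on with
  | H g =>
    show ((QuotientGroup.mk g * QuotientGroup.mk n : G ⧸ ⁅N, (⊤ : Subgroup G)⁆)) = _
    rw [← QuotientGroup.mk_mul, ← QuotientGroup.mk_mul, QuotientGroup.eq]
    have h : (g * n)⁻¹ * (n * g) = ⁅n⁻¹, g⁻¹⁆ := by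
      simp [commutatorElement_def]; group
    rw [h]
    exact Subgroup.commutator_mem_commutator (inv_mem hn) (Subgroup.mem_top _)

lemma eq_on_commutator {ι : Type} {H : Type*} [Group H] (a b : FreeGroup ι →* H)
    (h : ∀ x, a x * (b x)⁻¹ ∈ Subgroup.center H) :
    ∀ x ∈ commutator (FreeGroup ι), a x = b x := by
  have hc : ∀ z : H, z ∈ Subgroup.center H → ∀ w : H, z * w = w * z := fun z hz w =>
    (Subgroup.mem_center_iff.mp hz w).symm
  let d : FreeGroup ι →* Subgroup.center H :=
  { toFun := fun x => ⟨a x * (b x)⁻¹, h x⟩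
    map_one' := by ext; simp
    map_mul' := by
      intro x y
      ext
      show a (x * y) * (b (x * y))⁻¹ = (a x * (b x)⁻¹) * (a y * (b y)⁻¹)
      calc a (x * y) * (b (x * y))⁻¹
          = a x * ((a y * (b y)⁻¹) * (b x)⁻¹) := by
            rw [map_mul, map_mul, mul_inv_rev]; group
        _ = a x * ((b x)⁻¹ * (a y * (b y)⁻¹)) := by rw [hc _ (h y) (b x)⁻¹]
        _ = (a x * (b x)⁻¹) * (a y * (b y)⁻¹) := by group }
  intro x hx
  have hker : d x = 1 := by
    letI : CommGroup (Subgroup.center H) := { (Subgroup.center H).toGroup with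
      mul_comm := fun a b => Subtype.ext (Subgroup.mem_center_iff.mp b.2 a) }
    exact Abelianization.commutator_subset_ker d hx
  have h1 : a x * (b x)⁻¹ = 1 := congrArg Subtype.val hker
  exact mul_inv_eq_one.mp h1

lemma mem_commutator_map {A B : Type*} [Group A] [Group B] (f : A →* B) {x : A}
    (hx : x ∈ commutator A) : f x ∈ commutator B := by
  have h1 : f x ∈ Subgroup.map f (commutator A) := Subgroup.mem_map_of_mem f hx
  have h2 : Subgroup.map f (commutator A) ≤ commutator B := by
    rw [commutator_def, commutator_def, Subgroup.map_commutator]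
    exact Subgroup.commutator_mono le_top le_top
  exact h2 h1

end Helpers

/-- Witt formula: number of basic commutators of weight `n` on `d` letters. -/
def wittChi (n d : ℕ) : ℕ :=
  ((∑ m ∈ n.divisors, ArithmeticFunction.moebius m * (d : ℤ) ^ (n / m)) / n).toNat

/-- `iterCommutator R c = [R, F, …, F]` with `c` copies of `F`. -/
def iterCommutator {F : Type*} [Group F] (R : Subgroup F) : ℕ → Subgroup F
  | 0 => R
  | c + 1 => ⁅iterCommutator R c, (⊤ : Subgroup F)⁆

instance iterCommutator_normal {F : Type*} [Group F] (R : Subgroup F) [h : R.Normal]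
    (c : ℕ) : (iterCommutator R c).Normal := by
  induction c with
  | zero => exact h
  | succ n ih => exact Subgroup.commutator_normal _ _

lemma iterCommutator_one {F : Type*} [Group F] (R : Subgroup F) :
    iterCommutator R 1 = ⁅R, (⊤ : Subgroup F)⁆ := rfl

/-- A free presentation `1 → R → F → G → 1` of a group `G`. -/
structure FreePresentation (G : Type) [Group G] where
  ι : Type
  π : FreeGroup ι →* G
  surj : Function.Surjective π

/-- The `c`-nilpotent multiplier `M^(c)(G) = (R ∩ γ_{c+1}(F)) / [R, _c F]`
(the Schur multiplier when `c = 1`), realized as a subgroup of `F / [R, _c F]`. -/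
def nilMult {G : Type} [Group G] (P : FreePresentation G) (c : ℕ) :
    Subgroup (FreeGroup P.ι ⧸ iterCommutator P.π.ker c) :=
  Subgroup.map (QuotientGroup.mk' (iterCommutator P.π.ker c))
    (P.π.ker ⊓ (⊤ : Subgroup (FreeGroup P.ι)).lowerCentralSeries c)

/-- Stallings–Stammbach: every extension `1 → N → G → Q → 1` (here `N = ker π` for a
surjection `π : G → Q`) determines a five-term exact sequence
`M(G) → M(Q) → N/[N,G] → G/G' → Q/Q' → 1`. -/
theorem stallings_stammbach (G Q : Type) [Group G] [Group Q] (π : G →* Q)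
    (hπ : Function.Surjective π)
    (PG : FreePresentation G) (PQ : FreePresentation Q) :
    ∃ (f1 : nilMult PG 1 →* nilMult PQ 1)
      (f2 : nilMult PQ 1 →*
        (Subgroup.map (QuotientGroup.mk' ⁅π.ker, (⊤ : Subgroup G)⁆) π.ker))
      (f3 : (Subgroup.map (QuotientGroup.mk' ⁅π.ker, (⊤ : Subgroup G)⁆) π.ker) →*
        Abelianization G)
      (f4 : Abelianization G →* Abelianization Q),
      f1.range = f2.ker ∧ f2.range = f3.ker ∧ f3.range = f4.ker ∧
        Function.Surjective f4 := by
  classical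
  -- lifts between the free groups
  obtain ⟨φ, hφ⟩ := exists_mlift PQ.π PQ.surj (π.comp PG.π)
  have hsurj : Function.Surjective (π.comp PG.π) := by
    intro q
    obtain ⟨g, hg⟩ := hπ q
    obtain ⟨x, hx⟩ := PG.surj g
    exact ⟨x, by simp [hx, hg]⟩
  obtain ⟨θ, hθ⟩ := exists_mlift (π.comp PG.π) hsurj PQ.π
  have hφpt : ∀ x, PQ.π (φ x) = π (PG.π x) := fun x => DFunLike.congr_fun hφ x
  have hθpt : ∀ y, π (PG.π (θ y)) = PQ.π y := fun y => DFunLike.congr_fun hθ y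
  -- basic kernel facts
  have hφR : ∀ x ∈ PG.π.ker, φ x ∈ PQ.π.ker := by
    intro x hx
    rw [MonoidHom.mem_ker] at hx ⊢
    rw [hφpt, hx, map_one]
  have hψR : ∀ y ∈ PQ.π.ker, PG.π (θ y) ∈ π.ker := by
    intro y hy
    rw [MonoidHom.mem_ker] at hy ⊢
    rw [hθpt, hy]
  have hφS : ∀ s ∈ (π.comp PG.π).ker, φ s ∈ PQ.π.ker := by
    intro s hs
    rw [MonoidHom.mem_ker] at hs ⊢
    rw [hφpt]
    exact hs
  -- commutator compatibilities
  have hφC : iterCommutator PG.π.ker 1 ≤ (iterCommutator PQ.π.ker 1).comap φ := by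
    rw [iterCommutator_one, iterCommutator_one, ← Subgroup.map_le_iff_le_comap,
      Subgroup.map_commutator]
    refine Subgroup.commutator_mono ?_ le_top
    rintro _ ⟨x, hx, rfl⟩
    exact hφR x hx
  have hψC : iterCommutator PQ.π.ker 1 ≤ Subgroup.comap (PG.π.comp θ) ⁅π.ker, (⊤ : Subgroup G)⁆ := by
    rw [iterCommutator_one, ← Subgroup.map_le_iff_le_comap, Subgroup.map_commutator]
    refine Subgroup.commutator_mono ?_ le_top
    rintro _ ⟨y, hy, rfl⟩
    exact hψR y hy
  -- the four maps
  obtain ⟨f1, hf1⟩ : ∃ f1 : nilMult PG 1 →* nilMult PQ 1,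
      ∀ (u : FreeGroup PG.ι) (hu : QuotientGroup.mk' (iterCommutator PG.π.ker 1) u ∈ nilMult PG 1),
        ((f1 ⟨QuotientGroup.mk' _ u, hu⟩ : nilMult PQ 1) : FreeGroup PQ.ι ⧸ iterCommutator PQ.π.ker 1)
          = QuotientGroup.mk' _ (φ u) := by
    refine ⟨MonoidHom.codRestrict
      ((QuotientGroup.map _ _ φ hφC).domRestrict (nilMult PG 1)) _ ?_, ?_⟩
    · rintro ⟨x, hx⟩
      obtain ⟨u, hu, rfl⟩ := Subgroup.mem_map.mp hx
      obtain ⟨hu1, hu2⟩ := Subgroup.mem_inf.mp hu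
      refine Subgroup.mem_map.mpr ⟨φ u, Subgroup.mem_inf.mpr ⟨hφR u hu1, ?_⟩, ?_⟩
      · rw [Subgroup.top_lowerCentralSeries_one] at hu2 ⊢
        exact mem_commutator_map φ hu2
      · rw [MonoidHom.domRestrict_apply, QuotientGroup.map_mk']
        rfl
    · intro u hu
      rfl
  obtain ⟨f2, hf2⟩ : ∃ f2 : nilMult PQ 1 →*
      (Subgroup.map (QuotientGroup.mk' ⁅π.ker, (⊤ : Subgroup G)⁆) π.ker),
      ∀ (w : FreeGroup PQ.ι) (hw : QuotientGroup.mk' (iterCommutator PQ.π.ker 1) w ∈ nilMult PQ 1),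
        ((f2 ⟨QuotientGroup.mk' _ w, hw⟩ : _) : G ⧸ ⁅π.ker, (⊤ : Subgroup G)⁆)
          = QuotientGroup.mk' _ (PG.π (θ w)) := by
    refine ⟨MonoidHom.codRestrict
      ((QuotientGroup.map _ _ (PG.π.comp θ) hψC).domRestrict (nilMult PQ 1)) _ ?_, ?_⟩
    · rintro ⟨x, hx⟩
      obtain ⟨w, hw, rfl⟩ := Subgroup.mem_map.mp hx
      obtain ⟨hw1, _⟩ := Subgroup.mem_inf.mp hw
      refine Subgroup.mem_map.mpr ⟨PG.π (θ w), hψR w hw1, ?_⟩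
      rw [MonoidHom.domRestrict_apply, QuotientGroup.map_mk']
      rfl
    · intro w hw
      rfl
  have h3 : ∀ x ∈ ⁅π.ker, (⊤ : Subgroup G)⁆, Abelianization.of x = 1 := by
    intro x hx
    have hx' : x ∈ commutator G := by
      rw [_root_.commutator_def]
      exact Subgroup.commutator_mono le_top le_top hx
    exact Abelianization.commutator_subset_ker (Abelianization.of) hx'
  obtain ⟨f3, hf3⟩ : ∃ f3 : (Subgroup.map (QuotientGroup.mk' ⁅π.ker, (⊤ : Subgroup G)⁆) π.ker) →*
      Abelianization G,
      ∀ (g : G) (hg : QuotientGroup.mk' ⁅π.ker, (⊤ : Subgroup G)⁆ g ∈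
        Subgroup.map (QuotientGroup.mk' ⁅π.ker, (⊤ : Subgroup G)⁆) π.ker),
        f3 ⟨QuotientGroup.mk' _ g, hg⟩ = Abelianization.of g := by
    refine ⟨(QuotientGroup.lift _ Abelianization.of h3).domRestrict _, ?_⟩
    intro g hg
    rfl
  -- key computations: the two "difference homomorphism" identities
  have hcent1 : ∀ x : FreeGroup PG.ι,
      ((QuotientGroup.mk' ⁅π.ker, (⊤ : Subgroup G)⁆).comp (PG.π.comp (θ.comp φ))) x
        * (((QuotientGroup.mk' ⁅π.ker, (⊤ : Subgroup G)⁆).comp PG.π) x)⁻¹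
        ∈ Subgroup.center (G ⧸ ⁅π.ker, (⊤ : Subgroup G)⁆) := by
    intro x
    have hmem : PG.π (θ (φ x)) * (PG.π x)⁻¹ ∈ π.ker := by
      rw [MonoidHom.mem_ker, map_mul, map_inv, hθpt, hφpt, mul_inv_cancel]
    have hval : ((QuotientGroup.mk' ⁅π.ker, (⊤ : Subgroup G)⁆).comp (PG.π.comp (θ.comp φ))) x
        * (((QuotientGroup.mk' ⁅π.ker, (⊤ : Subgroup G)⁆).comp PG.π) x)⁻¹
        = QuotientGroup.mk (PG.π (θ (φ x)) * (PG.π x)⁻¹) := by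
      simp [QuotientGroup.mk_mul, QuotientGroup.mk_inv]
    rw [hval]
    exact mk_mem_center π.ker hmem
  have key1 : ∀ u ∈ commutator (FreeGroup PG.ι),
      (QuotientGroup.mk' ⁅π.ker, (⊤ : Subgroup G)⁆) (PG.π (θ (φ u)))
        = (QuotientGroup.mk' ⁅π.ker, (⊤ : Subgroup G)⁆) (PG.π u) := by
    intro u hu
    have h := eq_on_commutator _ _ hcent1 u hu
    simpa using h
  have hcent2 : ∀ y : FreeGroup PQ.ι,
      ((QuotientGroup.mk' (iterCommutator PQ.π.ker 1)).comp (φ.comp θ)) y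
        * ((QuotientGroup.mk' (iterCommutator PQ.π.ker 1)) y)⁻¹
        ∈ Subgroup.center (FreeGroup PQ.ι ⧸ iterCommutator PQ.π.ker 1) := by
    intro y
    have hmem : φ (θ y) * y⁻¹ ∈ PQ.π.ker := by
      rw [MonoidHom.mem_ker, map_mul, map_inv, hφpt, hθpt, mul_inv_cancel]
    have hval : ((QuotientGroup.mk' (iterCommutator PQ.π.ker 1)).comp (φ.comp θ)) y
        * ((QuotientGroup.mk' (iterCommutator PQ.π.ker 1)) y)⁻¹
        = QuotientGroup.mk (φ (θ y) * y⁻¹) := by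
      simp [QuotientGroup.mk_mul, QuotientGroup.mk_inv]
    rw [hval]
    exact mk_mem_center PQ.π.ker hmem
  have key2 : ∀ y ∈ commutator (FreeGroup PQ.ι),
      (QuotientGroup.mk' (iterCommutator PQ.π.ker 1)) (φ (θ y))
        = (QuotientGroup.mk' (iterCommutator PQ.π.ker 1)) y := by
    intro y hy
    have h := eq_on_commutator _ _ hcent2 y hy
    simpa using h
  refine ⟨f1, f2, f3, Abelianization.map π, ?_, ?_, ?_, ?_⟩
  -- exactness at M(Q)
  · ext b
    constructor
    · rintro ⟨a, rfl⟩
      rcases a with ⟨aval, ha⟩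
      obtain ⟨u, hu, rfl⟩ := Subgroup.mem_map.mp ha
      obtain ⟨hu1, hu2⟩ := Subgroup.mem_inf.mp hu
      rw [MonoidHom.mem_ker]
      apply Subtype.ext
      have hφmem : QuotientGroup.mk' (iterCommutator PQ.π.ker 1) (φ u) ∈ nilMult PQ 1 :=
        Subgroup.mem_map.mpr ⟨φ u,
          Subgroup.mem_inf.mpr ⟨hφR u hu1, mem_commutator_map φ hu2⟩, rfl⟩
      have heq : f1 ⟨QuotientGroup.mk' _ u, ha⟩ = ⟨QuotientGroup.mk' _ (φ u), hφmem⟩ :=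
        Subtype.ext (hf1 u ha)
      rw [heq, hf2 _ hφmem, key1 u hu2, OneMemClass.coe_one, MonoidHom.mem_ker.mp hu1,
        map_one]
    · intro hb
      rcases b with ⟨xval, hx⟩
      rw [MonoidHom.mem_ker] at hb
      obtain ⟨w, hw, rfl⟩ := Subgroup.mem_map.mp hx
      obtain ⟨hw1, hw2⟩ := Subgroup.mem_inf.mp hw
      have hval := congrArg Subtype.val hb
      rw [hf2 w hx, OneMemClass.coe_one] at hval
      have hmemC : PG.π (θ w) ∈ ⁅π.ker, (⊤ : Subgroup G)⁆ := by
        rwa [QuotientGroup.mk'_apply, QuotientGroup.eq_one_iff] at hval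
      have hkerS : Subgroup.map PG.π (π.comp PG.π).ker = π.ker := by
        apply le_antisymm
        · rintro _ ⟨s, hs, rfl⟩
          exact hs
        · intro n hn
          obtain ⟨s, rfl⟩ := PG.surj n
          exact ⟨s, hn, rfl⟩
      have hmapS : Subgroup.map PG.π ⁅(π.comp PG.π).ker, (⊤ : Subgroup (FreeGroup PG.ι))⁆
          = ⁅π.ker, (⊤ : Subgroup G)⁆ := by
        rw [Subgroup.map_commutator, hkerS, Subgroup.map_top_of_surjective _ PG.surj]
      obtain ⟨v, hvS, hv⟩ : ∃ v ∈ ⁅(π.comp PG.π).ker, (⊤ : Subgroup (FreeGroup PG.ι))⁆,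
          PG.π v = PG.π (θ w) := by
        refine Subgroup.mem_map.mp ?_
        rw [hmapS]
        exact hmemC
      have hx0ker : θ w * v⁻¹ ∈ PG.π.ker := by
        rw [MonoidHom.mem_ker, map_mul, map_inv, hv, mul_inv_cancel]
      have hvcomm : v ∈ commutator (FreeGroup PG.ι) := by
        rw [_root_.commutator_def]
        exact Subgroup.commutator_mono le_top le_top hvS
      have hx0comm : θ w * v⁻¹ ∈ commutator (FreeGroup PG.ι) :=
        mul_mem (mem_commutator_map θ hw2) (inv_mem hvcomm)
      have hx0mem : QuotientGroup.mk' (iterCommutator PG.π.ker 1) (θ w * v⁻¹) ∈ nilMult PG 1 :=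
        Subgroup.mem_map.mpr ⟨θ w * v⁻¹, Subgroup.mem_inf.mpr ⟨hx0ker, hx0comm⟩, rfl⟩
      refine ⟨⟨QuotientGroup.mk' _ (θ w * v⁻¹), hx0mem⟩, ?_⟩
      apply Subtype.ext
      rw [hf1 _ hx0mem]
      have hφvmem : φ v ∈ ⁅PQ.π.ker, (⊤ : Subgroup (FreeGroup PQ.ι))⁆ := by
        have h1 : φ v ∈ Subgroup.map φ ⁅(π.comp PG.π).ker, (⊤ : Subgroup (FreeGroup PG.ι))⁆ :=
          Subgroup.mem_map_of_mem φ hvS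
        rw [Subgroup.map_commutator] at h1
        refine Subgroup.commutator_mono ?_ le_top h1
        rintro _ ⟨s, hs, rfl⟩
        exact hφS s hs
      have hφv1 : (QuotientGroup.mk' (iterCommutator PQ.π.ker 1)) (φ v) = 1 := by
        rw [QuotientGroup.mk'_apply, QuotientGroup.eq_one_iff, iterCommutator_one]
        exact hφvmem
      rw [map_mul, map_inv, map_mul, map_inv, hφv1, inv_one, mul_one, key2 w hw2]
  -- exactness at N/[N,G]
  · ext b
    constructor
    · rintro ⟨a, rfl⟩
      rcases a with ⟨aval, ha⟩
      obtain ⟨w, hw, rfl⟩ := Subgroup.mem_map.mp ha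
      obtain ⟨hw1, hw2⟩ := Subgroup.mem_inf.mp hw
      rw [MonoidHom.mem_ker]
      have hψmem : PG.π (θ w) ∈ π.ker := hψR w hw1
      have hmem2 : QuotientGroup.mk' ⁅π.ker, (⊤ : Subgroup G)⁆ (PG.π (θ w)) ∈
          Subgroup.map (QuotientGroup.mk' ⁅π.ker, (⊤ : Subgroup G)⁆) π.ker :=
        Subgroup.mem_map.mpr ⟨_, hψmem, rfl⟩
      have heq : f2 ⟨QuotientGroup.mk' _ w, ha⟩ = ⟨QuotientGroup.mk' _ (PG.π (θ w)), hmem2⟩ :=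
        Subtype.ext (hf2 w ha)
      rw [heq, hf3 _ hmem2]
      have hcommw : PG.π (θ w) ∈ commutator G := mem_commutator_map (PG.π.comp θ) hw2
      exact Abelianization.commutator_subset_ker Abelianization.of hcommw
    · intro hb
      rcases b with ⟨xval, hx⟩
      rw [MonoidHom.mem_ker] at hb
      obtain ⟨n, hn, rfl⟩ := Subgroup.mem_map.mp hx
      rw [hf3 n hx] at hb
      have hncomm : n ∈ commutator G := (QuotientGroup.eq_one_iff n).mp hb
      have hcommG : Subgroup.map PG.π (commutator (FreeGroup PG.ι)) = commutator G := by
        rw [_root_.commutator_def, _root_.commutator_def, Subgroup.map_commutator,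
          Subgroup.map_top_of_surjective _ PG.surj]
      obtain ⟨u, hu, huπ⟩ := Subgroup.mem_map.mp (hcommG ▸ hncomm)
      have hφuker : φ u ∈ PQ.π.ker := by
        rw [MonoidHom.mem_ker, hφpt, huπ]
        exact hn
      have hφucomm : φ u ∈ (⊤ : Subgroup (FreeGroup PQ.ι)).lowerCentralSeries 1 := mem_commutator_map φ hu
      have hmemQ : QuotientGroup.mk' (iterCommutator PQ.π.ker 1) (φ u) ∈ nilMult PQ 1 :=
        Subgroup.mem_map.mpr ⟨φ u, Subgroup.mem_inf.mpr ⟨hφuker, hφucomm⟩, rfl⟩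
      refine ⟨⟨_, hmemQ⟩, ?_⟩
      apply Subtype.ext
      rw [hf2 _ hmemQ, key1 u hu, huπ]
  -- exactness at G/G'
  · ext y
    constructor
    · rintro ⟨a, rfl⟩
      rcases a with ⟨aval, ha⟩
      obtain ⟨n, hn, rfl⟩ := Subgroup.mem_map.mp ha
      rw [MonoidHom.mem_ker, hf3 n ha, Abelianization.map_of, MonoidHom.mem_ker.mp hn,
        map_one]
    · intro hy
      rw [MonoidHom.mem_ker] at hy
      obtain ⟨g, rfl⟩ : ∃ g, Abelianization.of g = y :=
        QuotientGroup.induction_on y fun z => ⟨z, rfl⟩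
      rw [Abelianization.map_of] at hy
      have hπg : π g ∈ commutator Q := (QuotientGroup.eq_one_iff (π g)).mp hy
      have hcommQ : Subgroup.map π (commutator G) = commutator Q := by
        rw [_root_.commutator_def, _root_.commutator_def, Subgroup.map_commutator,
          Subgroup.map_top_of_surjective _ hπ]
      obtain ⟨c, hc, hcg⟩ := Subgroup.mem_map.mp (hcommQ ▸ hπg)
      have hgc : g * c⁻¹ ∈ π.ker := by
        rw [MonoidHom.mem_ker, map_mul, map_inv, hcg, mul_inv_cancel]
      have hmem : QuotientGroup.mk' ⁅π.ker, (⊤ : Subgroup G)⁆ (g * c⁻¹) ∈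
          Subgroup.map (QuotientGroup.mk' ⁅π.ker, (⊤ : Subgroup G)⁆) π.ker :=
        Subgroup.mem_map.mpr ⟨_, hgc, rfl⟩
      refine ⟨⟨_, hmem⟩, ?_⟩
      rw [hf3 _ hmem]
      have hc1 : Abelianization.of c = 1 :=
        Abelianization.commutator_subset_ker Abelianization.of hc
      rw [map_mul, map_inv, hc1, inv_one, mul_one]
  -- surjectivity of G/G' → Q/Q'
  · intro y
    obtain ⟨q, rfl⟩ : ∃ q, Abelianization.of q = y :=
      QuotientGroup.induction_on y fun z => ⟨z, rfl⟩
    obtain ⟨g, hg⟩ := hπ q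
    exact ⟨Abelianization.of g, by rw [Abelianization.map_of, hg]⟩
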